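/- Let P ∈ ℝ^{m×m} be symmetric with P² = P, and let X = diag(x) and V = diag(v) for x, v ∈ ℝ^m. Then for every index i, |e_iᵀ P X P V P e_i| ≤ (1/2)·e_iᵀ P X² P e_i + (1/2)·e_iᵀ P V² P e_i. Consequently, the vector with entries (P ∘ (P X P))v satisfies |((P ∘ (P X P)) v)_i| ≤ (1/2)(P^{(2)} x²)_i + (1/2)(P^{(2)} v²)_i, where ∘ denotes the Hadamard product, P^{(2)} is the entrywise square of P, and x², v² are entrywise squares. -/

import Mathlib

open Matrix

private lemma key_sum {m : ℕ} (P : Matrix (Fin m) (Fin m) ℝ)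
    (hsymm : Pᵀ = P) (hidem : P * P = P) (x : Fin m → ℝ) (i : Fin m) :
    ∑ j, ((P * Matrix.diagonal x * P) i j) ^ 2 ≤ ∑ j, (P i j) ^ 2 * (x j) ^ 2 := by
  set Q := P * Matrix.diagonal x * P with hQ
  have hP : ∀ a b : Fin m, P a b = P b a := fun a b =>
    (congrFun (congrFun hsymm a) b).symm.trans (Matrix.transpose_apply P a b)
  have hQsymm : Qᵀ = Q := by
    rw [hQ, Matrix.transpose_mul, Matrix.transpose_mul, Matrix.diagonal_transpose, hsymm,
      Matrix.mul_assoc]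
  set u : Fin m → ℝ := fun j => x j * P j i with hu
  have h1 : ∑ j, (Q i j) ^ 2 = (Q * Q) i i := by
    rw [Matrix.mul_apply]
    refine Finset.sum_congr rfl fun j _ => ?_
    have : Q j i = Q i j := by
      conv_lhs => rw [← hQsymm]
      rfl
    rw [this, sq]
  have h2 : Q * Q = P * Matrix.diagonal x * P * Matrix.diagonal x * P := by
    rw [hQ]
    calc P * Matrix.diagonal x * P * (P * Matrix.diagonal x * P)
        = P * Matrix.diagonal x * (P * P) * Matrix.diagonal x * P := by
          simp only [Matrix.mul_assoc]
      _ = P * Matrix.diagonal x * P * Matrix.diagonal x * P := by rw [hidem]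
  have h3 : (P * Matrix.diagonal x * P * Matrix.diagonal x * P) i i
      = u ⬝ᵥ P.mulVec u := by
    simp only [Matrix.mul_apply, Matrix.mul_diagonal, Matrix.diagonal_apply,
      dotProduct, Matrix.mulVec, Finset.sum_mul, Finset.mul_sum,
      mul_ite, ite_mul, mul_zero, zero_mul, Finset.sum_ite_eq, Finset.sum_ite_eq',
      Finset.mem_univ, if_true, hu]
    rw [Finset.sum_comm]
    refine Finset.sum_congr rfl fun j _ => ?_
    refine Finset.sum_congr rfl fun k _ => ?_
    rw [hP i j]
    ring
  have hps : (1 - P).PosSemidef := by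
    have h1P : (1 - P)ᴴ * (1 - P) = 1 - P := by
      have : (1 - P)ᴴ = 1 - P := by
        ext a b
        simp [Matrix.conjTranspose_apply, Matrix.sub_apply, Matrix.one_apply, hP a b, eq_comm]
      rw [this, Matrix.sub_mul, Matrix.mul_sub, Matrix.mul_sub, hidem]
      simp
    rw [← h1P]
    exact Matrix.posSemidef_conjTranspose_mul_self _
  have h4 : u ⬝ᵥ P.mulVec u ≤ u ⬝ᵥ u := by
    have := hps.dotProduct_mulVec_nonneg u
    simp only [Matrix.sub_mulVec, Matrix.one_mulVec, dotProduct_sub, star_trivial] at this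
    linarith
  have h5 : u ⬝ᵥ u = ∑ j, (P i j) ^ 2 * (x j) ^ 2 := by
    simp only [dotProduct, hu]
    refine Finset.sum_congr rfl fun j _ => ?_
    rw [hP i j]; ring
  calc ∑ j, (Q i j) ^ 2 = u ⬝ᵥ P.mulVec u := by rw [h1, h2, h3]
    _ ≤ u ⬝ᵥ u := h4
    _ = ∑ j, (P i j) ^ 2 * (x j) ^ 2 := h5

/-- For an orthogonal projection matrix `P` and diagonal `X = diag x`, `V = diag v`:
`|e_iᵀ P X P V P e_i| ≤ ½ e_iᵀ P X² P e_i + ½ e_iᵀ P V² P e_i`, and consequently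
`|((P ∘ (P X P)) v)_i| ≤ ½ (P⁽²⁾ x²)_i + ½ (P⁽²⁾ v²)_i`, where `∘` is the
Hadamard product and squares of vectors are entrywise. -/
theorem stmt_8 {m : ℕ} (P : Matrix (Fin m) (Fin m) ℝ)
    (hsymm : Pᵀ = P) (hidem : P * P = P) (x v : Fin m → ℝ) (i : Fin m) :
    |(P * Matrix.diagonal x * P * Matrix.diagonal v * P) i i| ≤
      (1/2) * (P * Matrix.diagonal (fun j => (x j) ^ 2) * P) i i +
      (1/2) * (P * Matrix.diagonal (fun j => (v j) ^ 2) * P) i i ∧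
    |∑ j, P i j * (P * Matrix.diagonal x * P) i j * v j| ≤
      (1/2) * (∑ j, (P i j) ^ 2 * (x j) ^ 2) +
      (1/2) * (∑ j, (P i j) ^ 2 * (v j) ^ 2) := by
  have hP : ∀ a b : Fin m, P a b = P b a := fun a b =>
    (congrFun (congrFun hsymm a) b).symm.trans (Matrix.transpose_apply P a b)
  set Q := P * Matrix.diagonal x * P with hQ
  -- the core inequality (second conjunct)
  have core : |∑ j, P i j * Q i j * v j| ≤
      (1/2) * (∑ j, (P i j) ^ 2 * (x j) ^ 2) +
      (1/2) * (∑ j, (P i j) ^ 2 * (v j) ^ 2) := by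
    have habs : |∑ j, P i j * Q i j * v j| ≤ ∑ j, |P i j * Q i j * v j| :=
      Finset.abs_sum_le_sum_abs _ _
    have hterm : ∀ j, |P i j * Q i j * v j| ≤
        (1/2) * (Q i j) ^ 2 + (1/2) * ((P i j) ^ 2 * (v j) ^ 2) := by
      intro j
      have h2 := two_mul_le_add_sq (|Q i j|) (|P i j * v j|)
      have : |P i j * Q i j * v j| = |Q i j| * |P i j * v j| := by
        rw [← abs_mul]; ring_nf
      rw [this]
      have h3 : |Q i j| ^ 2 = (Q i j) ^ 2 := sq_abs _
      have h4 : |P i j * v j| ^ 2 = (P i j) ^ 2 * (v j) ^ 2 := by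
        rw [sq_abs]; ring
      nlinarith [sq_abs (Q i j), sq_abs (P i j * v j)]
    have hkey := key_sum P hsymm hidem x i
    calc |∑ j, P i j * Q i j * v j|
        ≤ ∑ j, |P i j * Q i j * v j| := habs
      _ ≤ ∑ j, ((1/2) * (Q i j) ^ 2 + (1/2) * ((P i j) ^ 2 * (v j) ^ 2)) :=
          Finset.sum_le_sum fun j _ => hterm j
      _ = (1/2) * (∑ j, (Q i j) ^ 2) + (1/2) * (∑ j, (P i j) ^ 2 * (v j) ^ 2) := by
          rw [Finset.sum_add_distrib, Finset.mul_sum, Finset.mul_sum]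
      _ ≤ (1/2) * (∑ j, (P i j) ^ 2 * (x j) ^ 2) +
          (1/2) * (∑ j, (P i j) ^ 2 * (v j) ^ 2) := by linarith
  refine ⟨?_, core⟩
  -- first conjunct: rewrite everything to match `core`
  have e1 : (P * Matrix.diagonal x * P * Matrix.diagonal v * P) i i
      = ∑ j, P i j * Q i j * v j := by
    have : P * Matrix.diagonal x * P * Matrix.diagonal v * P
        = Q * (Matrix.diagonal v * P) := by rw [hQ, Matrix.mul_assoc]
    rw [this, Matrix.mul_apply]
    refine Finset.sum_congr rfl fun j _ => ?_
    rw [Matrix.diagonal_mul, hP j i]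
    ring
  have e2 : (P * Matrix.diagonal (fun j => (x j) ^ 2) * P) i i
      = ∑ j, (P i j) ^ 2 * (x j) ^ 2 := by
    rw [Matrix.mul_apply]
    refine Finset.sum_congr rfl fun j _ => ?_
    rw [Matrix.mul_diagonal, hP j i]
    ring
  have e3 : (P * Matrix.diagonal (fun j => (v j) ^ 2) * P) i i
      = ∑ j, (P i j) ^ 2 * (v j) ^ 2 := by
    rw [Matrix.mul_apply]
    refine Finset.sum_congr rfl fun j _ => ?_
    rw [Matrix.mul_diagonal, hP j i]
    ring
  rw [e1, e2, e3]
  exact core
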